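/- Let 1 < p < ∞, t > 0, s > 0, and suppose there exists C ≥ 0 such that for every f ∈ L^p(ℂⁿ, dv_s) the function w ↦ e^{t⟨z,w⟩} f(w) is dv_t-integrable for a.e. z ∈ ℂⁿ and ∫_{ℂⁿ} |S_t f|^p dv_s ≤ C^p ∫_{ℂⁿ} |f|^p dv_s, where S_t f(z) = ∫_{ℂⁿ} e^{t⟨z,w⟩} f(w) dv_t(w). Then p·t > s. -/

import Mathlib

open MeasureTheory

/-- `|z|² = |z₁|² + ⋯ + |zₙ|²` on `ℂⁿ`. -/
noncomputable def nsq {n : ℕ} (z : Fin n → ℂ) : ℝ := ∑ i, Complex.normSq (z i)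

/-- `⟨z,w⟩ = z₁·conj w₁ + ⋯ + zₙ·conj wₙ` on `ℂⁿ`. -/
noncomputable def herm {n : ℕ} (z w : Fin n → ℂ) : ℂ := ∑ i, z i * (starRingEnd ℂ) (w i)

/-- The Gaussian probability measure `dv_t(z) = (t/π)^n e^{-t|z|²} dv(z)` on `ℂⁿ`. -/
noncomputable def gaussMeasure (n : ℕ) (t : ℝ) : Measure (Fin n → ℂ) :=
  volume.withDensity fun z => ENNReal.ofReal ((t / Real.pi) ^ n * Real.exp (-t * nsq z))

/-- Boundedness of the operator `S_t f(z) = ∫ e^{t⟨z,w⟩} f(w) dv_t(w)` on `L^p(ℂⁿ, dv_s)`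
with constant `C`: for every `f ∈ L^p(dv_s)` the integrand is `dv_t`-integrable for a.e. `z`
and `∫ |S_t f|^p dv_s ≤ C^p ∫ |f|^p dv_s`. -/
def SBounded (n : ℕ) (t s p C : ℝ) : Prop :=
  ∀ f : (Fin n → ℂ) → ℂ, MemLp f (ENNReal.ofReal p) (gaussMeasure n s) →
    (∀ᵐ z ∂(volume : Measure (Fin n → ℂ)),
      Integrable (fun w => Complex.exp ((t : ℂ) * herm z w) * f w) (gaussMeasure n t)) ∧
    ∫⁻ z, ENNReal.ofReal
        (‖∫ w, Complex.exp ((t : ℂ) * herm z w) * f w ∂(gaussMeasure n t)‖ ^ p)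
      ∂(gaussMeasure n s)
      ≤ ENNReal.ofReal (C ^ p) *
        ∫⁻ z, ENNReal.ofReal (‖f z‖ ^ p) ∂(gaussMeasure n s)

open Filter Metric Module
open scoped ENNReal NNReal


lemma nsq_nonneg {n : ℕ} (z : Fin n → ℂ) : 0 ≤ nsq z :=
  Finset.sum_nonneg fun _ _ => Complex.normSq_nonneg _

lemma continuous_nsq {n : ℕ} : Continuous (nsq (n := n)) := by
  unfold nsq
  exact continuous_finset_sum _ fun i _ =>
    Complex.continuous_normSq.comp (continuous_apply i)


lemma measurable_gaussDensity (n : ℕ) (t : ℝ) :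
    Measurable fun w : Fin n → ℂ =>
      ENNReal.ofReal ((t / Real.pi) ^ n * Real.exp (-t * nsq w)) :=
  ENNReal.measurable_ofReal.comp
    ((continuous_const.mul
      (Real.continuous_exp.comp (continuous_const.mul continuous_nsq))).measurable)

lemma nsq_pos {n : ℕ} {z : Fin n → ℂ} (hz : z ≠ 0) : 0 < nsq z := by
  rcases Function.ne_iff.mp hz with ⟨i, hi⟩
  exact Finset.sum_pos' (fun j _ => Complex.normSq_nonneg _)
    ⟨i, Finset.mem_univ i, Complex.normSq_pos.mpr hi⟩

lemma sq_norm_le_nsq {n : ℕ} (w : Fin n → ℂ) : ‖w‖ ^ 2 ≤ nsq w := by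
  have h1 : ‖w‖ ≤ Real.sqrt (nsq w) := by
    refine (pi_norm_le_iff_of_nonneg (Real.sqrt_nonneg _)).mpr fun i => ?_
    have h2 : ‖w i‖ ^ 2 ≤ nsq w := by
      rw [Complex.sq_norm]
      exact Finset.single_le_sum (f := fun i => Complex.normSq (w i))
        (fun i _ => Complex.normSq_nonneg _) (Finset.mem_univ i)
    calc ‖w i‖ = Real.sqrt (‖w i‖ ^ 2) := by
            rw [Real.sqrt_sq (norm_nonneg _)]
      _ ≤ Real.sqrt (nsq w) := Real.sqrt_le_sqrt h2
  calc ‖w‖ ^ 2 ≤ Real.sqrt (nsq w) ^ 2 := by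
        have := norm_nonneg w
        nlinarith [Real.sqrt_nonneg (nsq w)]
    _ = nsq w := Real.sq_sqrt (nsq_nonneg w)

lemma finrank_pi_complex (n : ℕ) : finrank ℝ (Fin n → ℂ) = 2 * n := by
  rw [Module.finrank_pi_fintype]
  simp [Complex.finrank_real_complex, Finset.sum_const, mul_comm]

lemma key_real (n : ℕ) {p t s q r : ℝ} (hp : 1 < p) (ht : 0 < t) (hs : 0 < s)
    (hpts : p * t ≤ s) (hr : 0 ≤ r) (hq : r ^ 2 ≤ q) :
    (s / Real.pi) ^ n * Real.exp (-s * q) * (Real.exp (t * q) / (1 + q) ^ n) ^ p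
      ≤ (s / Real.pi) ^ n * 2 ^ ((n : ℝ) * p) * (1 + r) ^ (-(2 * ((n : ℝ) * p))) := by
  have hq0 : 0 ≤ q := le_trans (sq_nonneg r) hq
  have ha : (0:ℝ) < 1 + q := by linarith
  have hb : (0:ℝ) < 1 + r := by linarith
  have hp0 : (0:ℝ) ≤ p := by linarith
  have hnp : (0:ℝ) ≤ (n : ℝ) * p := by positivity
  have hc : (0:ℝ) ≤ (s / Real.pi) ^ n := by positivity
  have e1 : (Real.exp (t * q) / (1 + q) ^ n) ^ p
      = Real.exp (t * q * p) / (1 + q) ^ ((n : ℝ) * p) := by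
    rw [Real.div_rpow (Real.exp_pos _).le (by positivity), ← Real.exp_mul,
      ← Real.rpow_natCast (1 + q) n, ← Real.rpow_mul ha.le]
  have hbase : ((1 + r) ^ 2 / 2 : ℝ) ≤ 1 + q := by nlinarith [sq_nonneg (1 - r)]
  have hbase0 : (0:ℝ) < (1 + r) ^ 2 / 2 := by positivity
  calc (s / Real.pi) ^ n * Real.exp (-s * q) * (Real.exp (t * q) / (1 + q) ^ n) ^ p
      = (s / Real.pi) ^ n *
        (Real.exp (-s * q + t * q * p) / (1 + q) ^ ((n : ℝ) * p)) := by
        rw [e1, Real.exp_add]; ring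
    _ ≤ (s / Real.pi) ^ n * (1 / (1 + q) ^ ((n : ℝ) * p)) := by
        have h6 : Real.exp (-s * q + t * q * p) ≤ 1 := by
          rw [Real.exp_le_one_iff]; nlinarith
        have h7 : (0:ℝ) < (1 + q) ^ ((n : ℝ) * p) := Real.rpow_pos_of_pos ha _
        exact mul_le_mul_of_nonneg_left (by gcongr) hc
    _ ≤ (s / Real.pi) ^ n * (1 / ((1 + r) ^ 2 / 2) ^ ((n : ℝ) * p)) := by
        have h8 : ((1 + r) ^ 2 / 2 : ℝ) ^ ((n : ℝ) * p) ≤ (1 + q) ^ ((n : ℝ) * p) :=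
          Real.rpow_le_rpow hbase0.le hbase hnp
        have h9 : (0:ℝ) < ((1 + r) ^ 2 / 2 : ℝ) ^ ((n : ℝ) * p) :=
          Real.rpow_pos_of_pos hbase0 _
        exact mul_le_mul_of_nonneg_left (one_div_le_one_div_of_le h9 h8) hc
    _ = (s / Real.pi) ^ n * 2 ^ ((n : ℝ) * p) * (1 + r) ^ (-(2 * ((n : ℝ) * p))) := by
        rw [Real.div_rpow (by positivity) (by norm_num),
          ← Real.rpow_natCast (1 + r) 2, ← Real.rpow_mul hb.le,
          one_div_div, Real.rpow_neg hb.le]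
        rw [show ((2:ℕ) : ℝ) * ((n : ℝ) * p) = 2 * ((n : ℝ) * p) by norm_num]
        ring

lemma memLp_testfun (n : ℕ) {p t s : ℝ} (hn : 0 < n) (hp : 1 < p) (ht : 0 < t) (hs : 0 < s)
    (hpts : p * t ≤ s) :
    MemLp (fun w : Fin n → ℂ => ((Real.exp (t * nsq w) / (1 + nsq w) ^ n : ℝ) : ℂ))
      (ENNReal.ofReal p) (gaussMeasure n s) := by
  have h1q : ∀ w : Fin n → ℂ, (0:ℝ) < 1 + nsq w := fun w => by
    have := nsq_nonneg w; linarith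
  have hcont : Continuous fun w : Fin n → ℂ =>
      ((Real.exp (t * nsq w) / (1 + nsq w) ^ n : ℝ) : ℂ) := by
    refine Complex.continuous_ofReal.comp ?_
    exact (Real.continuous_exp.comp (continuous_const.mul continuous_nsq)).div
      ((continuous_const.add continuous_nsq).pow n)
      (fun w => pow_ne_zero _ (h1q w).ne')
  refine ⟨hcont.aestronglyMeasurable, ?_⟩
  have hp0 : (0:ℝ) < p := by linarith
  rw [eLpNorm_eq_lintegral_rpow_enorm_toReal (by simp [ENNReal.ofReal_eq_zero]; linarith)
    (by simp)]
  refine ENNReal.rpow_lt_top_of_nonneg (by positivity) (ne_of_lt ?_)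
  rw [ENNReal.toReal_ofReal hp0.le]
  unfold gaussMeasure
  rw [lintegral_withDensity_eq_lintegral_mul _ (measurable_gaussDensity n s)
    (g := fun w => ‖((Real.exp (t * nsq w) / (1 + nsq w) ^ n : ℝ) : ℂ)‖ₑ ^ p)
    (hcont.measurable.enorm.pow measurable_const)]
  simp only [Pi.mul_apply]
  have hfin : (finrank ℝ (Fin n → ℂ) : ℝ) < 2 * ((n : ℝ) * p) := by
    rw [finrank_pi_complex]
    push_cast
    nlinarith [(Nat.one_le_cast (α := ℝ)).mpr hn]
  have hFint : Integrable
      (fun w : Fin n → ℂ =>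
        (s / Real.pi) ^ n * 2 ^ ((n : ℝ) * p) * (1 + ‖w‖) ^ (-(2 * ((n : ℝ) * p))))
      volume := (integrable_one_add_norm hfin).const_mul _
  have hFnn : ∀ w : Fin n → ℂ,
      0 ≤ (s / Real.pi) ^ n * 2 ^ ((n : ℝ) * p) * (1 + ‖w‖) ^ (-(2 * ((n : ℝ) * p))) := by
    intro w
    have := norm_nonneg w
    positivity
  calc ∫⁻ w, ENNReal.ofReal ((s / Real.pi) ^ n * Real.exp (-s * nsq w)) *
        ‖((Real.exp (t * nsq w) / (1 + nsq w) ^ n : ℝ) : ℂ)‖ₑ ^ p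
        ∂(volume : Measure (Fin n → ℂ))
      ≤ ∫⁻ w, ENNReal.ofReal
          ((s / Real.pi) ^ n * 2 ^ ((n : ℝ) * p) * (1 + ‖w‖) ^ (-(2 * ((n : ℝ) * p))))
          ∂(volume : Measure (Fin n → ℂ)) := by
        refine lintegral_mono fun w => ?_
        have hfw : ‖((Real.exp (t * nsq w) / (1 + nsq w) ^ n : ℝ) : ℂ)‖
            = Real.exp (t * nsq w) / (1 + nsq w) ^ n := by
          rw [Complex.norm_real, Real.norm_of_nonneg
            (div_nonneg (Real.exp_pos _).le (pow_nonneg (by linarith [nsq_nonneg w]) n))]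
        rw [← ofReal_norm, ENNReal.ofReal_rpow_of_nonneg (norm_nonneg _)
          (by linarith), ← ENNReal.ofReal_mul (by positivity)]
        refine ENNReal.ofReal_le_ofReal ?_
        rw [hfw]
        exact key_real n hp ht hs hpts (norm_nonneg w) (sq_norm_le_nsq w)
    _ < ⊤ := by
        rw [← hasFiniteIntegral_iff_ofReal (Eventually.of_forall hFnn)]
        exact hFint.2

lemma alg1 (c eA E Dn M V : ℝ) (hDn : Dn ≠ 0) (hM : M ≠ 0) :
    c * eA * V / Dn * (E / M) = c * (eA * E / (Dn * M)) * V := by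
  field_simp

lemma tendsto_aux {β : ℝ} (hβ : 0 < β) (k : ℕ) :
    Tendsto (fun m : ℕ => Real.exp (β * m) / (m : ℝ) ^ k) atTop atTop := by
  have h1 : Tendsto (fun y : ℝ => β ^ k * (Real.exp y / y ^ k)) atTop atTop :=
    (Real.tendsto_exp_div_pow_atTop k).const_mul_atTop (by positivity)
  have h2 : Tendsto (fun x : ℝ => β * x) atTop atTop :=
    Tendsto.const_mul_atTop hβ tendsto_id
  have h3 : Tendsto (fun x : ℝ => Real.exp (β * x) / x ^ k) atTop atTop := by
    refine (h1.comp h2).congr' ?_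
    filter_upwards [eventually_gt_atTop 0] with x hx
    have hx0 : x ≠ 0 := hx.ne'
    have hβ0 : β ≠ 0 := hβ.ne'
    simp only [Function.comp_apply]
    rw [mul_pow]
    field_simp
  exact h3.comp tendsto_natCast_atTop_atTop

set_option maxHeartbeats 1000000 in
lemma main_contradiction (n : ℕ) (t : ℝ) (ht : 0 < t)
    (z : Fin n → ℂ) (hzne : z ≠ 0)
    (hz : Integrable (fun w => Complex.exp ((t : ℂ) * herm z w) *
      ((Real.exp (t * nsq w) / (1 + nsq w) ^ n : ℝ) : ℂ)) (gaussMeasure n t)) : False := by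
  set f : (Fin n → ℂ) → ℂ :=
    fun w => ((Real.exp (t * nsq w) / (1 + nsq w) ^ n : ℝ) : ℂ) with hf
  have h1q : ∀ w : Fin n → ℂ, (0:ℝ) < 1 + nsq w := fun w => by
    have := nsq_nonneg w; linarith
  -- transfer integrability to Lebesgue measure
  set G : (Fin n → ℂ) → ℝ := fun w =>
    (t / Real.pi) ^ n * (Real.exp (t * (herm z w).re) / (1 + nsq w) ^ n) with hG_def
  have hGnn : ∀ w, 0 ≤ G w := by
    intro w
    have := h1q w
    positivity
  have hG : Integrable G volume := by
    have hz1 : Integrable (fun w => ‖Complex.exp ((t : ℂ) * herm z w) * f w‖)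
        (gaussMeasure n t) := hz.norm
    rw [gaussMeasure] at hz1
    have h2 := (integrable_withDensity_iff (measurable_gaussDensity n t)
      (Eventually.of_forall fun w => ENNReal.ofReal_lt_top)).mp hz1
    refine h2.congr (Eventually.of_forall fun w => ?_)
    show ‖Complex.exp ((t : ℂ) * herm z w) * f w‖ *
      (ENNReal.ofReal ((t / Real.pi) ^ n * Real.exp (-t * nsq w))).toReal = G w
    have hd : (ENNReal.ofReal ((t / Real.pi) ^ n * Real.exp (-t * nsq w))).toReal
        = (t / Real.pi) ^ n * Real.exp (-t * nsq w) :=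
      ENNReal.toReal_ofReal (by positivity)
    rw [hd, norm_mul]
    have he : ‖Complex.exp ((t : ℂ) * herm z w)‖ = Real.exp (t * (herm z w).re) := by
      rw [Complex.norm_exp]
      congr 1
      simp [Complex.mul_re]
    have hfw : ‖f w‖ = Real.exp (t * nsq w) / (1 + nsq w) ^ n := by
      rw [hf, Complex.norm_real, Real.norm_of_nonneg
        (div_nonneg (Real.exp_pos _).le (pow_nonneg (by linarith [nsq_nonneg w]) n))]
    rw [he, hfw]
    show _ = (t / Real.pi) ^ n * (Real.exp (t * (herm z w).re) / (1 + nsq w) ^ n)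
    have h3 : Real.exp (-t * nsq w) = (Real.exp (t * nsq w))⁻¹ := by
      rw [← Real.exp_neg]; ring_nf
    rw [h3]
    have h4 : (Real.exp (t * nsq w)) ≠ 0 := (Real.exp_pos _).ne'
    have h5 : ((1 + nsq w) ^ n : ℝ) ≠ 0 := pow_ne_zero _ (h1q w).ne'
    field_simp
  clear_value G
  set b : ℝ := nsq z with hb_def
  have hb : 0 < b := nsq_pos hzne
  clear_value b
  set A : ℝ := ∑ i, ‖z i‖ with hA_def
  clear_value A
  set V : ℝ := (volume (closedBall (0 : Fin n → ℂ) 1)).toReal with hV_def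
  have hV : 0 < V := by
    rw [hV_def]
    refine ENNReal.toReal_pos ?_ measure_closedBall_lt_top.ne
    exact (measure_closedBall_pos _ _ one_pos).ne'
  clear_value V
  set K : ℕ → ℝ := fun m =>
    (t / Real.pi) ^ n *
      (Real.exp (t * ((m : ℝ) * b - A)) / (1 + (2 * (m : ℝ) ^ 2 * b + 2 * n)) ^ n)
    with hK_def
  clear_value K
  set I : ℝ := ∫ w, G w with hI_def
  clear_value I
  -- pointwise lower bound on the ball around m • z
  have key2 : ∀ m : ℕ, ∀ w ∈ closedBall ((m : ℂ) • z) 1, K m ≤ G w := by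
    intro m w hw
    have hwi : ∀ i, ‖w i - (m : ℂ) * z i‖ ≤ 1 := by
      intro i
      have h1 : ‖w - (m : ℂ) • z‖ ≤ 1 := by
        rwa [mem_closedBall, dist_eq_norm] at hw
      have h2 := norm_le_pi_norm (w - (m : ℂ) • z) i
      simp only [Pi.sub_apply, Pi.smul_apply, smul_eq_mul] at h2
      exact h2.trans h1
    have hre : (m : ℝ) * b - A ≤ (herm z w).re := by
      have hterm : ∀ i ∈ Finset.univ,
          (m : ℝ) * Complex.normSq (z i) - ‖z i‖
            ≤ (z i * (starRingEnd ℂ) (w i)).re := by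
        intro i _
        have hui := hwi i
        have hwi' : w i = (m : ℂ) * z i + (w i - (m : ℂ) * z i) := by ring
        rw [hwi', map_add, mul_add, Complex.add_re]
        have h1 : (z i * (starRingEnd ℂ) ((m : ℂ) * z i)).re
            = (m : ℝ) * Complex.normSq (z i) := by
          rw [map_mul, show z i * ((starRingEnd ℂ) (m : ℂ) * (starRingEnd ℂ) (z i))
            = (starRingEnd ℂ) (m : ℂ) * (z i * (starRingEnd ℂ) (z i)) from by ring,
            Complex.mul_conj]
          simp
        have h2 : -(‖z i‖)
            ≤ (z i * (starRingEnd ℂ) (w i - (m : ℂ) * z i)).re := by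
          have h3 := Complex.abs_re_le_norm (z i * (starRingEnd ℂ) (w i - (m : ℂ) * z i))
          have h4 : ‖z i * (starRingEnd ℂ) (w i - (m : ℂ) * z i)‖
              ≤ ‖z i‖ := by
            rw [norm_mul, Complex.norm_conj]
            calc ‖z i‖ * ‖w i - (m : ℂ) * z i‖
                ≤ ‖z i‖ * 1 := by
                  gcongr
              _ = ‖z i‖ := mul_one _
          have h5 := abs_le.mp (h3.trans h4)
          linarith [h5.1]
        linarith [h1, h2]
      calc (m : ℝ) * b - A
          = ∑ i, ((m : ℝ) * Complex.normSq (z i) - ‖z i‖) := by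
            rw [Finset.sum_sub_distrib, ← Finset.mul_sum, hb_def, hA_def]; rfl
        _ ≤ ∑ i, (z i * (starRingEnd ℂ) (w i)).re := Finset.sum_le_sum hterm
        _ = (herm z w).re := by rw [herm, Complex.re_sum]
    have hnsqw : nsq w ≤ 2 * (m : ℝ) ^ 2 * b + 2 * n := by
      have hterm : ∀ i ∈ Finset.univ,
          Complex.normSq (w i) ≤ 2 * (m : ℝ) ^ 2 * Complex.normSq (z i) + 2 := by
        intro i _
        have hui := hwi i
        have h1 : ‖w i‖ ≤ (m : ℝ) * ‖z i‖ + 1 := by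
          calc ‖w i‖
              = ‖(m : ℂ) * z i + (w i - (m : ℂ) * z i)‖ := by ring_nf
            _ ≤ ‖(m : ℂ) * z i‖ + ‖w i - (m : ℂ) * z i‖ :=
                norm_add_le _ _
            _ ≤ (m : ℝ) * ‖z i‖ + 1 := by
                rw [norm_mul, Complex.norm_natCast]
                gcongr
        have h2 : Complex.normSq (w i) = ‖w i‖ ^ 2 := (Complex.sq_norm _).symm
        have h3 : Complex.normSq (z i) = ‖z i‖ ^ 2 := (Complex.sq_norm _).symm
        rw [h2, h3]
        have hm0 : (0:ℝ) ≤ (m : ℝ) := Nat.cast_nonneg m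
        nlinarith [norm_nonneg (w i), norm_nonneg (z i),
          mul_le_mul h1 h1 (norm_nonneg _) (by positivity),
          sq_nonneg ((m : ℝ) * ‖z i‖ - 1)]
      calc nsq w = ∑ i, Complex.normSq (w i) := rfl
        _ ≤ ∑ i, (2 * (m : ℝ) ^ 2 * Complex.normSq (z i) + 2) := Finset.sum_le_sum hterm
        _ = 2 * (m : ℝ) ^ 2 * b + 2 * n := by
            rw [Finset.sum_add_distrib, ← Finset.mul_sum, Finset.sum_const]
            simp [hb_def, nsq, mul_comm]
    simp only [hK_def, hG_def]
    have hden : (0:ℝ) < 1 + nsq w := h1q w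
    have he1 : Real.exp (t * ((m : ℝ) * b - A)) ≤ Real.exp (t * (herm z w).re) := by
      apply Real.exp_le_exp.mpr
      nlinarith
    have he2 : (1 + nsq w) ^ n ≤ (1 + (2 * (m : ℝ) ^ 2 * b + 2 * n)) ^ n := by
      gcongr <;> linarith
    have he3 : ((0:ℝ)) < (1 + nsq w) ^ n := by positivity
    refine mul_le_mul_of_nonneg_left ?_ (by positivity)
    exact div_le_div₀ (Real.exp_pos _).le he1 he3 he2
  -- the integral dominates each ball bound
  have hIub : ∀ m : ℕ, K m * V ≤ I := by
    intro m
    have hBm : volume (closedBall ((m : ℂ) • z) 1)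
        = volume (closedBall (0 : Fin n → ℂ) 1) :=
      Measure.addHaar_closedBall_center _ _ _
    have h1 : K m * (volume (closedBall ((m : ℂ) • z) 1)).toReal
        ≤ ∫ w in closedBall ((m : ℂ) • z) 1, G w :=
      setIntegral_ge_of_const_le_real measurableSet_closedBall
        measure_closedBall_lt_top.ne (key2 m) hG.integrableOn
    have h2 : ∫ w in closedBall ((m : ℂ) • z) 1, G w ≤ I := by
      rw [hI_def]
      exact setIntegral_le_integral hG (Eventually.of_forall hGnn)
    rw [hBm] at h1
    calc K m * V = K m * (volume (closedBall (0 : Fin n → ℂ) 1)).toReal := by rw [hV_def]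
      _ ≤ ∫ w in closedBall ((m : ℂ) • z) 1, G w := h1
      _ ≤ I := h2
  -- but K m * V → ∞
  have hKV : Tendsto (fun m : ℕ => K m * V) atTop atTop := by
    set D : ℝ := 1 + 2 * b + 2 * n with hD_def
    have hD : 0 < D := by
      have h0n : (0:ℝ) ≤ (n : ℝ) := Nat.cast_nonneg n
      rw [hD_def]; linarith
    clear_value D
    set c1 : ℝ := (t / Real.pi) ^ n * Real.exp (-(t * A)) * V / D ^ n with hc1_def
    have hc1 : 0 < c1 := by
      rw [hc1_def]
      exact div_pos (mul_pos (mul_pos (by positivity) (Real.exp_pos _)) hV) (pow_pos hD _)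
    clear_value c1
    have hmain : Tendsto (fun m : ℕ => c1 * (Real.exp (t * b * m) / (m : ℝ) ^ (2 * n)))
        atTop atTop :=
      (tendsto_aux (mul_pos ht hb) (2 * n)).const_mul_atTop hc1
    refine tendsto_atTop_mono' atTop ?_ hmain
    filter_upwards [eventually_ge_atTop 1] with m hm
    have hm1 : (1:ℝ) ≤ (m : ℝ) := Nat.one_le_cast.mpr hm
    have hm0 : (0:ℝ) < (m : ℝ) := by linarith
    have hdenle : (1 + (2 * (m : ℝ) ^ 2 * b + 2 * n)) ^ n ≤ D ^ n * (m : ℝ) ^ (2 * n) := by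
      have h1 : 1 + (2 * (m : ℝ) ^ 2 * b + 2 * n) ≤ D * (m : ℝ) ^ 2 := by
        have hm2 : (1:ℝ) ≤ (m : ℝ) ^ 2 := by nlinarith
        have h2n := mul_le_mul_of_nonneg_left hm2 (show (0:ℝ) ≤ 2 * (n:ℝ) by positivity)
        rw [hD_def]
        nlinarith [h2n, hm2]
      calc (1 + (2 * (m : ℝ) ^ 2 * b + 2 * n)) ^ n ≤ (D * (m : ℝ) ^ 2) ^ n := by
            gcongr
        _ = D ^ n * (m : ℝ) ^ (2 * n) := by rw [mul_pow, ← pow_mul]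
    have hexp : Real.exp (t * ((m : ℝ) * b - A))
        = Real.exp (-(t * A)) * Real.exp (t * b * m) := by
      rw [← Real.exp_add]; ring_nf
    have hden0 : (0:ℝ) < (1 + (2 * (m : ℝ) ^ 2 * b + 2 * n)) ^ n := by positivity
    have hstep : Real.exp (t * ((m : ℝ) * b - A)) / (1 + (2 * (m : ℝ) ^ 2 * b + 2 * n)) ^ n
        ≥ Real.exp (-(t * A)) * Real.exp (t * b * m) / (D ^ n * (m : ℝ) ^ (2 * n)) := by
      rw [hexp]
      gcongr
    calc c1 * (Real.exp (t * b * m) / (m : ℝ) ^ (2 * n))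
        = (t / Real.pi) ^ n *
            (Real.exp (-(t * A)) * Real.exp (t * b * m) / (D ^ n * (m : ℝ) ^ (2 * n))) * V := by
          rw [hc1_def]
          exact alg1 _ _ _ _ _ _ (pow_pos hD n).ne' (pow_ne_zero _ hm0.ne')
      _ ≤ (t / Real.pi) ^ n *
            (Real.exp (t * ((m : ℝ) * b - A)) / (1 + (2 * (m : ℝ) ^ 2 * b + 2 * n)) ^ n) * V := by
          gcongr
      _ = K m * V := by rw [hK_def]
  obtain ⟨m, hm⟩ := (hKV.eventually_gt_atTop I).exists
  exact absurd (hIub m) (not_le.mpr hm)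

theorem stmt4 (n : ℕ) (hn : 0 < n) (p t s : ℝ) (hp : 1 < p) (ht : 0 < t) (hs : 0 < s)
    (h : ∃ C : ℝ, 0 ≤ C ∧ SBounded n t s p C) :
    p * t > s := by
  by_contra hlt
  push_neg at hlt
  obtain ⟨C, hC, hB⟩ := h
  obtain ⟨hae, -⟩ := hB _ (memLp_testfun n hn hp ht hs hlt)
  haveI : Nonempty (Fin n) := Fin.pos_iff_nonempty.mp hn
  have hz0 : ∀ᵐ z ∂(volume : Measure (Fin n → ℂ)), z ≠ 0 := by
    haveI : NullSingletonClass (volume : Measure (Fin n → ℂ)) := by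
      have : NullSingletonClass (Measure.pi fun _ : Fin n => (volume : Measure ℂ)) := inferInstance
      exact this
    rw [ae_iff]
    simp only [ne_eq, not_not, Set.setOf_eq_eq_singleton]
    exact measure_singleton 0
  obtain ⟨z, hz, hzne⟩ := (hae.and hz0).exists
  exact main_contradiction n t ht z hzne hz
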